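/- Let Θ be the k-dimensional probability simplex, f : Θ → ℝ bounded continuous, and M a set of probability densities on Θ with upper expectation E̅(f) := sup_{p∈M} ∫ f p dθ = f_max := sup_Θ f. Let L : Θ → ℝ (the likelihood of observed data) be bounded, nonnegative, measurable, strictly positive at each maximizer of f and continuous on a neighborhood of each maximizer. Then the posterior upper expectation satisfies E̅(f | data) := sup_{p∈M} (∫ f L p dθ)/(∫ L p dθ) = f_max, i.e., the upper expectation of f remains vacuous after updating by Bayes' rule. -/

import Mathlib

open MeasureTheory Set Filter Topology

/-- Vacuity of the posterior upper expectation: if the prior upper expectation of `f`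
over the set of densities `M` on the simplex is the vacuous value `f_max`, and the
likelihood `L` is bounded, nonnegative, measurable, strictly positive at each maximizer
of `f` and continuous near each maximizer, then the posterior upper expectation
(over densities with positive normalizer) is still `f_max`. -/
theorem stmt_5 (k : ℕ) (hk : 0 < k)
    (μ : Measure (Fin k → ℝ))
    (hsupp : ∀ᵐ θ ∂μ, θ ∈ stdSimplex ℝ (Fin k))
    (M : Set ((Fin k → ℝ) → ℝ))
    (hM : ∀ p ∈ M, (∀ θ, 0 ≤ p θ) ∧ Integrable p μ ∧ ∫ θ, p θ ∂μ = 1)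
    (f : (Fin k → ℝ) → ℝ) (hf : ContinuousOn f (stdSimplex ℝ (Fin k)))
    (fmax : ℝ) (hfmax : fmax = sSup (f '' stdSimplex ℝ (Fin k)))
    (hprior : sSup ((fun p => ∫ θ, f θ * p θ ∂μ) '' M) = fmax)
    (L : (Fin k → ℝ) → ℝ) (hLm : Measurable L)
    (hL0 : ∀ θ ∈ stdSimplex ℝ (Fin k), 0 ≤ L θ)
    (hLb : BddAbove (L '' stdSimplex ℝ (Fin k)))
    (hLpos : ∀ θ ∈ stdSimplex ℝ (Fin k), f θ = fmax → 0 < L θ)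
    (hLcont : ∀ θ ∈ stdSimplex ℝ (Fin k), f θ = fmax → ∃ U ∈ 𝓝 θ, ContinuousOn L U) :
    sSup ((fun p => (∫ θ, f θ * L θ * p θ ∂μ) / ∫ θ, L θ * p θ ∂μ) ''
        {p ∈ M | 0 < ∫ θ, L θ * p θ ∂μ}) = fmax := by
  classical
  set S := stdSimplex ℝ (Fin k) with hSdef
  have hSclosed : IsClosed S := isClosed_stdSimplex _ _
  have hSmeas : MeasurableSet S := hSclosed.measurableSet
  have hScomp : IsCompact S := isCompact_stdSimplex _ _
  have hSne : S.Nonempty := ⟨_, single_mem_stdSimplex ℝ (⟨0, hk⟩ : Fin k)⟩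
  have hres : μ.restrict S = μ := Measure.restrict_eq_self_of_ae_mem hsupp
  -- f is a.e. strongly measurable
  have hfaem : AEStronglyMeasurable f μ := by
    have h := hf.aemeasurable (μ := μ) hSmeas
    rw [hres] at h
    exact h.aestronglyMeasurable
  -- bound for f
  obtain ⟨F0, hF0⟩ := hScomp.exists_bound_of_continuousOn hf
  set F := max F0 1 with hFdef
  have hFpos : (0:ℝ) < F := lt_of_lt_of_le one_pos (le_max_right _ _)
  have hF : ∀ θ ∈ S, |f θ| ≤ F := fun θ hθ =>
    le_trans (by simpa using hF0 θ hθ) (le_max_left _ _)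
  -- bound for L
  obtain ⟨B0, hB0⟩ := hLb
  set B := max B0 1 with hBdef
  have hBpos : (0:ℝ) < B := lt_of_lt_of_le one_pos (le_max_right _ _)
  have hB : ∀ θ ∈ S, L θ ≤ B := fun θ hθ =>
    le_trans (hB0 (mem_image_of_mem L hθ)) (le_max_left _ _)
  -- fmax is attained
  obtain ⟨a0, ha0S, ha0eq, ha0ge⟩ := hScomp.exists_sSup_image_eq_and_ge hSne hf
  have hfa0 : f a0 = fmax := by rw [hfmax, ha0eq]
  have hfle : ∀ θ ∈ S, f θ ≤ fmax := fun θ hθ => hfa0 ▸ ha0ge θ hθ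
  have hfmaxF : fmax ≤ F := hfa0 ▸ (le_trans (le_abs_self _) (hF a0 ha0S))
  clear_value F B
  -- integrability for densities in M
  have hints : ∀ p ∈ M, Integrable (fun θ => L θ * p θ) μ ∧
      Integrable (fun θ => f θ * L θ * p θ) μ ∧ Integrable (fun θ => f θ * p θ) μ := by
    intro p hp
    obtain ⟨hp0, hpint, -⟩ := hM p hp
    have hLbd : ∀ᵐ θ ∂μ, ‖L θ‖ ≤ B := by
      filter_upwards [hsupp] with θ hθ
      rw [Real.norm_eq_abs, abs_of_nonneg (hL0 θ hθ)]
      exact hB θ hθ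
    have hfbd : ∀ᵐ θ ∂μ, ‖f θ‖ ≤ F := by
      filter_upwards [hsupp] with θ hθ
      exact hF θ hθ
    have hLp : Integrable (fun θ => L θ * p θ) μ :=
      hpint.bdd_mul hLm.aestronglyMeasurable hLbd
    have hfLp : Integrable (fun θ => f θ * L θ * p θ) μ := by
      have := hLp.bdd_mul hfaem hfbd
      simpa [mul_assoc] using this
    have hfp : Integrable (fun θ => f θ * p θ) μ := hpint.bdd_mul hfaem hfbd
    exact ⟨hLp, hfLp, hfp⟩
  -- degenerate case : M empty
  rcases M.eq_empty_or_nonempty with hMe | hMne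
  · rw [hMe] at hprior
    simp only [image_empty, Real.sSup_empty] at hprior
    rw [hMe]
    simp only [sep_setOf, mem_empty_iff_false, false_and, setOf_false, image_empty,
      Real.sSup_empty]
    exact hprior
  -- upper bound : every posterior expectation is at most fmax
  have hub : ∀ x ∈ ((fun p => (∫ θ, f θ * L θ * p θ ∂μ) / ∫ θ, L θ * p θ ∂μ) ''
      {p ∈ M | 0 < ∫ θ, L θ * p θ ∂μ}), x ≤ fmax := by
    rintro x ⟨p, ⟨hpM, hppos⟩, rfl⟩
    obtain ⟨hp0, hpint, hpnorm⟩ := hM p hpM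
    obtain ⟨hLp, hfLp, -⟩ := hints p hpM
    have hle : ∫ θ, f θ * L θ * p θ ∂μ ≤ fmax * ∫ θ, L θ * p θ ∂μ := by
      rw [← integral_const_mul]
      refine integral_mono_ae hfLp (hLp.const_mul fmax) ?_
      filter_upwards [hsupp] with θ hθ
      have h1 : 0 ≤ L θ * p θ := mul_nonneg (hL0 θ hθ) (hp0 θ)
      calc f θ * L θ * p θ = f θ * (L θ * p θ) := by ring
        _ ≤ fmax * (L θ * p θ) := mul_le_mul_of_nonneg_right (hfle θ hθ) h1
    exact (div_le_iff₀ hppos).mpr (by linarith)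
  -- lower bound: the posterior upper expectation exceeds fmax - ε for every ε > 0
  have hlb : ∀ ε > (0:ℝ), ∃ x ∈ ((fun p => (∫ θ, f θ * L θ * p θ ∂μ) / ∫ θ, L θ * p θ ∂μ) ''
      {p ∈ M | 0 < ∫ θ, L θ * p θ ∂μ}), fmax - ε ≤ x := by
    intro ε hε
    set ε0 := ε / 2 with hε0def
    have hε0 : 0 < ε0 := by positivity
    clear_value ε0
    -- the set of maximizers
    set A := S ∩ f ⁻¹' {fmax} with hAdef
    have hAcomp : IsCompact A :=
      hScomp.of_isClosed_subset (hf.preimage_isClosed_of_isClosed hSclosed isClosed_singleton)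
        inter_subset_left
    have ha0A : a0 ∈ A := ⟨ha0S, by simp [hfa0]⟩
    -- good neighborhoods of maximizers
    have hnbhd : ∀ a ∈ A, ∃ O : Set (Fin k → ℝ), IsOpen O ∧ a ∈ O ∧
        (∀ θ ∈ O, L a / 2 ≤ L θ) ∧ (∀ θ, θ ∈ O → θ ∈ S → fmax - ε0 < f θ) := by
      intro a ha
      obtain ⟨haS, haf'⟩ := ha
      have haf : f a = fmax := haf'
      obtain ⟨U, hU, hLU⟩ := hLcont a haS haf
      have hLa : 0 < L a := hLpos a haS haf
      have hcontA : ContinuousAt L a := hLU.continuousAt hU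
      have h1 : L ⁻¹' Ioi (L a / 2) ∈ 𝓝 a := hcontA (Ioi_mem_nhds (half_lt_self hLa))
      have h2 : f ⁻¹' Ioi (fmax - ε0) ∈ 𝓝[S] a := by
        refine hf a haS (Ioi_mem_nhds ?_)
        rw [haf]; linarith
      obtain ⟨u, huo, hau, husub⟩ := mem_nhdsWithin.mp h2
      obtain ⟨w, hwsub, hwo, haw⟩ := mem_nhds_iff.mp h1
      refine ⟨u ∩ w, huo.inter hwo, ⟨hau, haw⟩, ?_, ?_⟩
      · intro θ hθ
        exact le_of_lt (hwsub hθ.2)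
      · intro θ hθ hθS
        exact husub ⟨hθ.1, hθS⟩
    choose O hOopen haO hOL hOf using hnbhd
    -- finite subcover
    obtain ⟨t, ht⟩ := hAcomp.elim_nhds_subcover' (fun a ha => O a ha)
      (fun a ha => (hOopen a ha).mem_nhds (haO a ha))
    set V := ⋃ a ∈ t, O (a : (Fin k → ℝ)) a.2 with hVdef
    have hVopen : IsOpen V := isOpen_biUnion fun a _ => hOopen _ _
    have hVmeas : MeasurableSet V := hVopen.measurableSet
    have hAV : A ⊆ V := ht
    have htne : t.Nonempty := by
      rcases mem_iUnion₂.mp (hAV ha0A) with ⟨a, hat, -⟩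
      exact ⟨a, hat⟩
    set c := t.inf' htne (fun a => L (a : (Fin k → ℝ)) / 2) with hcdef
    have hcpos : 0 < c := by
      rw [hcdef, Finset.lt_inf'_iff]
      intro a hat
      have := hLpos (a : (Fin k → ℝ)) a.2.1 a.2.2
      linarith
    have hVL : ∀ θ ∈ V, c ≤ L θ := by
      intro θ hθ
      rcases mem_iUnion₂.mp hθ with ⟨a, hat, hθO⟩
      exact le_trans (Finset.inf'_le _ hat) (hOL _ _ θ hθO)
    have hVf : ∀ θ, θ ∈ V → θ ∈ S → fmax - ε0 < f θ := by
      intro θ hθ hθS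
      rcases mem_iUnion₂.mp hθ with ⟨a, hat, hθO⟩
      exact hOf _ _ θ hθO hθS
    clear_value V c
    -- gap on the complement
    obtain ⟨η, hη, hKf⟩ : ∃ η > (0:ℝ), ∀ θ ∈ S \ V, f θ ≤ fmax - η := by
      rcases (S \ V).eq_empty_or_nonempty with hKe | hKne
      · exact ⟨1, one_pos, fun θ hθ => by rw [hKe] at hθ; exact absurd hθ (notMem_empty θ)⟩
      · have hKcomp : IsCompact (S \ V) := hScomp.diff hVopen
        obtain ⟨m, hmK, hmeq, hmge⟩ :=
          hKcomp.exists_sSup_image_eq_and_ge hKne (hf.mono diff_subset)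
        have h1 : f m ≤ fmax := hfle m hmK.1
        have h2 : f m ≠ fmax := by
          intro h
          exact hmK.2 (hAV ⟨hmK.1, by simp [h]⟩)
        refine ⟨fmax - f m, by cases h1.lt_or_eq with
          | inl h => linarith
          | inr h => exact absurd h h2, fun θ hθ => by have := hmge θ hθ; linarith⟩
    -- choose a near-optimal prior
    set D := min (1/2 : ℝ) (ε0 * c / (4 * F * B)) with hDdef
    have hDpos : 0 < D := lt_min one_half_pos (by positivity)
    have hD2 : D ≤ 1/2 := min_le_left _ _
    have hDq : D ≤ ε0 * c / (4 * F * B) := min_le_right _ _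
    set δ := η * D with hδdef
    have hδpos : 0 < δ := mul_pos hη hDpos
    clear_value D δ
    have hlt : fmax - δ < sSup ((fun p => ∫ θ, f θ * p θ ∂μ) '' M) := by
      rw [hprior]; linarith
    obtain ⟨x, hxmem, hxlt⟩ := exists_lt_of_lt_csSup (hMne.image _) hlt
    obtain ⟨p, hpM, rfl⟩ := hxmem
    obtain ⟨hp0, hpint, hpnorm⟩ := hM p hpM
    obtain ⟨hLp, hfLp, hfp⟩ := hints p hpM
    -- split masses
    set I1 := ∫ θ in V, p θ ∂μ with hI1def
    set q := ∫ θ in Vᶜ, p θ ∂μ with hqdef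
    have hsplit : I1 + q = 1 := by
      rw [hI1def, hqdef, integral_add_compl hVmeas hpint, hpnorm]
    have hq0 : 0 ≤ q := setIntegral_nonneg hVmeas.compl fun θ _ => hp0 θ
    have hI10 : 0 ≤ I1 := setIntegral_nonneg hVmeas fun θ _ => hp0 θ
    clear_value I1 q
    -- step 1 : the prior expectation bound forces small mass outside V
    have hstep1 : ∫ θ, f θ * p θ ∂μ ≤ fmax - η * q := by
      have e1 : ∫ θ in V, f θ * p θ ∂μ ≤ fmax * I1 := by
        rw [hI1def, ← integral_const_mul]
        refine integral_mono_ae hfp.integrableOn ((hpint.const_mul fmax).integrableOn) ?_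
        filter_upwards [ae_restrict_of_ae hsupp] with θ hθ
        exact mul_le_mul_of_nonneg_right (hfle θ hθ) (hp0 θ)
      have e2 : ∫ θ in Vᶜ, f θ * p θ ∂μ ≤ (fmax - η) * q := by
        rw [hqdef, ← integral_const_mul]
        refine integral_mono_ae hfp.integrableOn ((hpint.const_mul _).integrableOn) ?_
        filter_upwards [ae_restrict_of_ae hsupp, ae_restrict_mem hVmeas.compl] with θ hθS hθV
        exact mul_le_mul_of_nonneg_right (hKf θ ⟨hθS, hθV⟩) (hp0 θ)
      have e3 : ∫ θ, f θ * p θ ∂μ = (∫ θ in V, f θ * p θ ∂μ) + ∫ θ in Vᶜ, f θ * p θ ∂μ :=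
        (integral_add_compl hVmeas hfp).symm
      rw [e3]
      calc (∫ θ in V, f θ * p θ ∂μ) + ∫ θ in Vᶜ, f θ * p θ ∂μ
          ≤ fmax * I1 + (fmax - η) * q := add_le_add e1 e2
        _ = fmax * (I1 + q) - η * q := by ring
        _ = fmax - η * q := by rw [hsplit]; ring
    have hqD : q < D := by
      have h1 : η * q < δ := by
        have := lt_of_lt_of_le hxlt hstep1
        linarith
      rw [hδdef] at h1
      exact lt_of_mul_lt_mul_left h1 (le_of_lt hη)
    have hq2 : q ≤ 1/2 := le_of_lt (lt_of_lt_of_le hqD hD2)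
    have hqD' : q * (4 * F * B) ≤ ε0 * c := by
      have h1 : q ≤ ε0 * c / (4 * F * B) := le_of_lt (lt_of_lt_of_le hqD hDq)
      rw [le_div_iff₀ (by positivity)] at h1
      exact h1
    -- step 2 : lower bound on the normalizer
    set N := ∫ θ, L θ * p θ ∂μ with hNdef
    clear_value N
    have hcompl_nonneg : 0 ≤ ∫ θ in Vᶜ, L θ * p θ ∂μ := by
      refine integral_nonneg_of_ae ?_
      filter_upwards [ae_restrict_of_ae hsupp] with θ hθ
      exact mul_nonneg (hL0 θ hθ) (hp0 θ)
    have hstep2 : c * I1 ≤ N := by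
      have e1 : c * I1 ≤ ∫ θ in V, L θ * p θ ∂μ := by
        rw [hI1def, ← integral_const_mul]
        refine integral_mono_ae ((hpint.const_mul c).integrableOn) hLp.integrableOn ?_
        filter_upwards [ae_restrict_mem hVmeas] with θ hθ
        exact mul_le_mul_of_nonneg_right (hVL θ hθ) (hp0 θ)
      have e3 : N = (∫ θ in V, L θ * p θ ∂μ) + ∫ θ in Vᶜ, L θ * p θ ∂μ := by
        rw [hNdef]; exact (integral_add_compl hVmeas hLp).symm
      rw [e3]
      linarith
    have hNlb : c * (1 - q) ≤ N := by
      have : I1 = 1 - q := by linarith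
      rw [← this]; exact hstep2
    have hNhalf : c / 2 ≤ N := by
      have hcq : 0 ≤ c * (1/2 - q) :=
        mul_nonneg (le_of_lt hcpos) (by linarith)
      nlinarith [hNlb]
    have hNpos : 0 < N := lt_of_lt_of_le (half_pos hcpos) hNhalf
    -- step 3 : the residual integral bound
    have hGint : Integrable (fun θ => (fmax - f θ) * (L θ * p θ)) μ := by
      have heq : (fun θ => (fmax - f θ) * (L θ * p θ))
          = fun θ => fmax * (L θ * p θ) - f θ * L θ * p θ := by funext θ; ring
      rw [heq]
      exact (hLp.const_mul fmax).sub hfLp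
    have hstep3 : fmax * N - (∫ θ, f θ * L θ * p θ ∂μ) ≤ ε0 * N + 2 * F * B * q := by
      have eG : ∫ θ, (fmax - f θ) * (L θ * p θ) ∂μ
          = fmax * N - ∫ θ, f θ * L θ * p θ ∂μ := by
        have : (fun θ => (fmax - f θ) * (L θ * p θ))
            = fun θ => fmax * (L θ * p θ) - f θ * L θ * p θ := by
          funext θ; ring
        rw [this, integral_sub (hLp.const_mul fmax) hfLp, integral_const_mul, hNdef]
      have e1 : ∫ θ in V, (fmax - f θ) * (L θ * p θ) ∂μ ≤ ε0 * ∫ θ in V, L θ * p θ ∂μ := by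
        rw [← integral_const_mul]
        refine integral_mono_ae hGint.integrableOn ((hLp.const_mul ε0).integrableOn) ?_
        filter_upwards [ae_restrict_of_ae hsupp, ae_restrict_mem hVmeas] with θ hθS hθV
        have h1 : fmax - f θ ≤ ε0 := by have := hVf θ hθV hθS; linarith
        exact mul_le_mul_of_nonneg_right h1 (mul_nonneg (hL0 θ hθS) (hp0 θ))
      have e2 : ∫ θ in Vᶜ, (fmax - f θ) * (L θ * p θ) ∂μ ≤ 2 * F * B * q := by
        rw [hqdef, ← integral_const_mul]
        refine integral_mono_ae hGint.integrableOn
          ((hpint.const_mul (2 * F * B)).integrableOn) ?_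
        filter_upwards [ae_restrict_of_ae hsupp] with θ hθ
        have h1 : 0 ≤ fmax - f θ := by have := hfle θ hθ; linarith
        have h2 : fmax - f θ ≤ 2 * F := by
          have := abs_le.mp (hF θ hθ); linarith
        have h3 : 0 ≤ L θ * p θ := mul_nonneg (hL0 θ hθ) (hp0 θ)
        have h4 : L θ * p θ ≤ B * p θ := mul_le_mul_of_nonneg_right (hB θ hθ) (hp0 θ)
        calc (fmax - f θ) * (L θ * p θ) ≤ 2 * F * (B * p θ) :=
              mul_le_mul h2 h4 h3 (by positivity)
          _ = 2 * F * B * p θ := by ring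
      have e3 : ∫ θ, (fmax - f θ) * (L θ * p θ) ∂μ
          = (∫ θ in V, (fmax - f θ) * (L θ * p θ) ∂μ)
            + ∫ θ in Vᶜ, (fmax - f θ) * (L θ * p θ) ∂μ :=
        (integral_add_compl hVmeas hGint).symm
      have e4 : ε0 * ∫ θ in V, L θ * p θ ∂μ ≤ ε0 * N := by
        refine mul_le_mul_of_nonneg_left ?_ (le_of_lt hε0)
        have e5 : N = (∫ θ in V, L θ * p θ ∂μ) + ∫ θ in Vᶜ, L θ * p θ ∂μ := by
          rw [hNdef]; exact (integral_add_compl hVmeas hLp).symm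
        linarith
      rw [← eG, e3]
      linarith
    -- conclude
    refine ⟨(∫ θ, f θ * L θ * p θ ∂μ) / N, ⟨p, ⟨hpM, ?_⟩, ?_⟩, ?_⟩
    · rw [← hNdef]; exact hNpos
    · show (∫ θ, f θ * L θ * p θ ∂μ) / (∫ θ, L θ * p θ ∂μ)
        = (∫ θ, f θ * L θ * p θ ∂μ) / N
      rw [hNdef]
    rw [le_div_iff₀ hNpos]
    have hkey : 2 * F * B * q ≤ ε0 * N := by
      have h1 : 2 * F * B * q ≤ ε0 * c / 2 := by linarith [hqD']
      have h2 : ε0 * (c / 2) ≤ ε0 * N :=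
        mul_le_mul_of_nonneg_left hNhalf (le_of_lt hε0)
      linarith
    have hε2 : ε = 2 * ε0 := by rw [hε0def]; ring
    rw [hε2]
    linarith [hstep3, hkey]
  -- assemble
  have himne : ((fun p => (∫ θ, f θ * L θ * p θ ∂μ) / ∫ θ, L θ * p θ ∂μ) ''
      {p ∈ M | 0 < ∫ θ, L θ * p θ ∂μ}).Nonempty := by
    obtain ⟨x, hx, -⟩ := hlb 1 one_pos
    exact ⟨x, hx⟩
  have hbdd : BddAbove ((fun p => (∫ θ, f θ * L θ * p θ ∂μ) / ∫ θ, L θ * p θ ∂μ) ''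
      {p ∈ M | 0 < ∫ θ, L θ * p θ ∂μ}) := ⟨fmax, fun x hx => hub x hx⟩
  refine le_antisymm (csSup_le himne hub) ?_
  refine le_of_forall_pos_le_add fun ε hε => ?_
  obtain ⟨x, hx, hxle⟩ := hlb ε hε
  have := le_csSup hbdd hx
  linarith
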